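/- Assume in addition that Ω is positive definite. If D v = μ v for some nonzero v ∈ ℂ^(2N) and some positive real number μ, then the R-inner product ⟨v, v⟩ = vᴴ R v is a positive real number. -/

import Mathlib

open Matrix ComplexOrder

/-- if `Ω` is positive definite and `D v = μ v` with `v ≠ 0` and `μ` a positive
real, then `⟨v, v⟩ = vᴴ R v` is a positive real number. -/
theorem stmt_7 {N : ℕ} (hN : 0 < N)
    (R Ω : Matrix (Fin N ⊕ Fin N) (Fin N ⊕ Fin N) ℂ)
    (hR : R.IsHermitian) (hΩ : Ω.IsHermitian)
    (Γ : Matrix (Fin N ⊕ Fin N) (Fin N ⊕ Fin N) ℂ)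
    (hΓ : Γ = Matrix.fromBlocks 0 1 1 0)
    (hRconj : Γ * R.map (starRingEnd ℂ) * Γ = -R)
    (hΩconj : Γ * Ω.map (starRingEnd ℂ) * Γ = Ω)
    (hRunit : IsUnit R.det)
    (D : Matrix (Fin N ⊕ Fin N) (Fin N ⊕ Fin N) ℂ) (hD : D = R⁻¹ * Ω)
    (hΩpos : Ω.PosDef)
    (v : Fin N ⊕ Fin N → ℂ) (hv : v ≠ 0) (μ : ℝ) (hμ : 0 < μ)
    (heig : D.mulVec v = (μ : ℂ) • v) :
    ∃ r : ℝ, 0 < r ∧ star v ⬝ᵥ R.mulVec v = (r : ℂ) := by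
  have hRD : R * D = Ω := by
    rw [hD, ← Matrix.mul_assoc, Matrix.mul_nonsing_inv _ hRunit, Matrix.one_mul]
  have hΩv : Ω.mulVec v = (μ : ℂ) • R.mulVec v := by
    rw [← hRD, ← Matrix.mulVec_mulVec, heig, Matrix.mulVec_smul]
  have hpos : 0 < star v ⬝ᵥ Ω.mulVec v := hΩpos.dotProduct_mulVec_pos hv
  obtain ⟨hre, him⟩ := Complex.lt_def.mp hpos
  simp only [Complex.zero_re, Complex.zero_im] at hre him
  have heq : star v ⬝ᵥ Ω.mulVec v = (μ : ℂ) * (star v ⬝ᵥ R.mulVec v) := by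
    rw [hΩv, dotProduct_smul, smul_eq_mul]
  have hμne : (μ : ℂ) ≠ 0 := by exact_mod_cast hμ.ne'
  refine ⟨(star v ⬝ᵥ Ω.mulVec v).re / μ, div_pos hre hμ, ?_⟩
  have hval : star v ⬝ᵥ Ω.mulVec v = (((star v ⬝ᵥ Ω.mulVec v).re : ℝ) : ℂ) :=
    Complex.ext_iff.mpr ⟨rfl, by simp [← him]⟩
  have hx : (μ : ℂ) * (star v ⬝ᵥ R.mulVec v) = (((star v ⬝ᵥ Ω.mulVec v).re : ℝ) : ℂ) :=
    heq.symm.trans hval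
  push_cast
  rw [eq_div_iff hμne]
  linear_combination hx
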